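/- Fix Δx > 0, Δt = Δx/8, T > 0 a multiple of Δt, M_Δ > 0 and a compact set K ⊂ ℝ, and let U_{Δ,ad} be the set of all functions U_o : ℝ → [0,1] constant on each cell C_j = [(j−1/2)Δx, (j+1/2)Δx), with TV(U_o) ≤ M_Δ and support contained in K. Let J, I map L¹_loc(ℝ) to [0,∞) and K̃ map L¹_loc([0,T]×ℝ) to [0,∞), with J and K̃ continuous with respect to L¹_loc convergence and I lower semi-continuous with respect to L¹_loc convergence. For H > 0 define G_{Δ,H}(U_o) = J(U_H(T,·)) + K̃(U_H) + I(U_o), where U_H is the approximate solution produced by the nonlocal Eulerian–Lagrangian scheme with parameter H from the cell values of U_o, and G_Δ(U_o) = J(U(T,·)) + K̃(U) + I(U_o), where U is produced by the local Eulerian–Lagrangian scheme. Let H_n > 0 with H_n → 0, and for each n let U_o^n be a minimizer of G_{Δ,H_n} over U_{Δ,ad}. Then there exist a subsequence (U_o^{n_k}) and U_o ∈ U_{Δ,ad} such that ‖U_o^{n_k} − U_o‖_{L¹(ℝ)} → 0 and U_o is a minimizer of G_Δ over U_{Δ,ad}. -/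

import Mathlib

open MeasureTheory Filter

/-- One step of the Eulerian–Lagrangian scheme: given cell values `U` and
speeds `V`, with `h_j = Δx + Δt (V_{j+1} - V_j)` and
`F_j = (U_j + U_{j-1})(V_j + V_{j-1}) / h_{j-1}`, the update is
`U'_j = (U_{j-1} + 2U_j + U_{j+1})/4 + (Δt/4)(F_j - F_{j+1})`. -/
noncomputable def elStep (dx dt : ℝ) (U V : ℤ → ℝ) (j : ℤ) : ℝ :=
  (U (j - 1) + 2 * U j + U (j + 1)) / 4
    + (dt / 4) *
      ((U j + U (j - 1)) * (V j + V (j - 1)) / (dx + dt * (V j - V (j - 1)))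
        - (U (j + 1) + U j) * (V (j + 1) + V j) / (dx + dt * (V (j + 1) - V j)))

/-- The normalized discrete convolution with `η_H(x) = η(x/H)/H`, `N_H = ⌈H/Δx⌉`. -/
noncomputable def discConv (dx H : ℝ) (η : ℝ → ℝ) (f : ℤ → ℝ) (j : ℤ) : ℝ :=
  (∑ i ∈ Finset.range ⌈H / dx⌉₊, f (j + (i : ℤ)) * (η ((-(i : ℝ) * dx) / H) / H))
    / (∑ i ∈ Finset.range ⌈H / dx⌉₊, η ((-(i : ℝ) * dx) / H) / H)

/-- Iterates of the local Eulerian–Lagrangian scheme with speed `v(r) = 1 - r`. -/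
noncomputable def locIter (dx dt : ℝ) (U0 : ℤ → ℝ) : ℕ → ℤ → ℝ
  | 0 => U0
  | m + 1 => elStep dx dt (locIter dx dt U0 m) (fun j => 1 - locIter dx dt U0 m j)

/-- Iterates of the nonlocal Eulerian–Lagrangian scheme with speed
`v(r) = 1 - r` evaluated at the discrete convolution with kernel `η_H`. -/
noncomputable def nlocIter (dx dt H : ℝ) (η : ℝ → ℝ) (U0 : ℤ → ℝ) : ℕ → ℤ → ℝ
  | 0 => U0
  | m + 1 => elStep dx dt (nlocIter dx dt H η U0 m)
      (fun j => 1 - discConv dx H η (nlocIter dx dt H η U0 m) j)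

/-- Hypotheses on the kernel `η`: `C²` and non-decreasing on `[-1,0]`, vanishing
at `-1`, unit integral on `[-1,0]`, zero outside `[-1,0]`. -/
def KernelOK (η : ℝ → ℝ) : Prop :=
  ContDiffOn ℝ 2 η (Set.Icc (-1 : ℝ) 0) ∧ MonotoneOn η (Set.Icc (-1 : ℝ) 0) ∧
    η (-1) = 0 ∧ (∫ x in (-1 : ℝ)..0, η x) = 1 ∧ ∀ x, x ∉ Set.Icc (-1 : ℝ) 0 → η x = 0

/-- Index of the grid cell `C_j = [(j-1/2)Δx, (j+1/2)Δx)` containing `x`. -/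
noncomputable def cellIdx (dx x : ℝ) : ℤ := ⌊x / dx + 1 / 2⌋

/-- The piecewise constant approximate solution produced by the local
Eulerian–Lagrangian scheme (`Δt = Δx/8`) from the cell values of `U_o`:
`U(t,x) = U^m_j` for `x ∈ C_j`, `t ∈ [mΔt, (m+1)Δt)`. -/
noncomputable def locSol (dx : ℝ) (Uo : ℝ → ℝ) (t x : ℝ) : ℝ :=
  locIter dx (dx / 8) (fun j => Uo ((j : ℝ) * dx)) ⌊t / (dx / 8)⌋₊ (cellIdx dx x)

/-- The piecewise constant approximate solution produced by the nonlocal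
Eulerian–Lagrangian scheme with parameter `H` (`Δt = Δx/8`). -/
noncomputable def nlocSol (dx H : ℝ) (η : ℝ → ℝ) (Uo : ℝ → ℝ) (t x : ℝ) : ℝ :=
  nlocIter dx (dx / 8) H η (fun j => Uo ((j : ℝ) * dx)) ⌊t / (dx / 8)⌋₊ (cellIdx dx x)

/-- The discrete admissible set `U_{Δ,ad}`: functions with values in `[0,1]`,
constant on each grid cell `C_j = [(j-1/2)Δx, (j+1/2)Δx)`, with total variation
at most `M` and support contained in `K`. -/
def Uad (dx M : ℝ) (K : Set ℝ) : Set (ℝ → ℝ) :=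
  {U | (∀ x, U x ∈ Set.Icc (0 : ℝ) 1) ∧
    (∀ j : ℤ, ∀ x ∈ Set.Ico (((j : ℝ) - 1 / 2) * dx) (((j : ℝ) + 1 / 2) * dx),
      U x = U ((j : ℝ) * dx)) ∧
    eVariationOn U Set.univ ≤ ENNReal.ofReal M ∧
    Function.support U ⊆ K}

/-- Convergence in `L¹` on every compact subset of `ℝ`. -/
def L1locConv (f : ℕ → ℝ → ℝ) (g : ℝ → ℝ) : Prop :=
  ∀ R > (0 : ℝ), Tendsto (fun n => ∫ x in (-R)..R, |f n x - g x|) atTop (nhds 0)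

/-- Convergence in `L¹` on every compact subset of `[0,T] × ℝ`. -/
def L1locConvT (T : ℝ) (f : ℕ → ℝ → ℝ → ℝ) (g : ℝ → ℝ → ℝ) : Prop :=
  ∀ R > (0 : ℝ),
    Tendsto (fun n => ∫ t in (0 : ℝ)..T, ∫ x in (-R)..R, |f n t x - g t x|) atTop (nhds 0)

/-- The nonlocal discrete objective functional
`G_{Δ,H}(U_o) = J(U_H(T,·)) + K̃(U_H) + I(U_o)`. -/
noncomputable def Gnloc (dx H T : ℝ) (η : ℝ → ℝ)
    (J : (ℝ → ℝ) → ℝ) (Kt : (ℝ → ℝ → ℝ) → ℝ) (I : (ℝ → ℝ) → ℝ) (Uo : ℝ → ℝ) : ℝ :=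
  J (fun x => nlocSol dx H η Uo T x) + Kt (nlocSol dx H η Uo) + I Uo

/-- The local discrete objective functional
`G_Δ(U_o) = J(U(T,·)) + K̃(U) + I(U_o)`. -/
noncomputable def Gloc (dx T : ℝ)
    (J : (ℝ → ℝ) → ℝ) (Kt : (ℝ → ℝ → ℝ) → ℝ) (I : (ℝ → ℝ) → ℝ) (Uo : ℝ → ℝ) : ℝ :=
  J (fun x => locSol dx Uo T x) + Kt (locSol dx Uo) + I Uo


open Topology

section AuxLemmas

private lemma eta0_pos {η : ℝ → ℝ} (hη : KernelOK η) : 0 < η 0 := by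
  obtain ⟨-, hmono, hm1, hint, -⟩ := hη
  by_contra h
  push_neg at h
  have hm : (-1 : ℝ) ∈ Set.Icc (-1:ℝ) 0 := by constructor <;> norm_num
  have h0 : (0 : ℝ) ∈ Set.Icc (-1:ℝ) 0 := by constructor <;> norm_num
  have hzero : Set.EqOn η 0 (Set.uIcc (-1:ℝ) 0) := by
    intro x hx
    rw [Set.uIcc_of_le (by norm_num : (-1:ℝ) ≤ 0)] at hx
    have h1 : η x ≤ η 0 := hmono hx h0 hx.2
    have h2 : η (-1) ≤ η x := hmono hm hx hx.1
    have : η x = 0 := le_antisymm (h1.trans h) (hm1 ▸ h2)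
    simpa using this
  have := intervalIntegral.integral_congr (μ := volume) hzero
  rw [hint] at this
  simp at this

private lemma discConv_eq {dx H : ℝ} (hH : 0 < H) (hHdx : H ≤ dx) (hdx : 0 < dx)
    {η : ℝ → ℝ} (hη0 : η 0 ≠ 0) (f : ℤ → ℝ) (j : ℤ) :
    discConv dx H η f j = f j := by
  have hceil : ⌈H / dx⌉₊ = 1 := by
    refine le_antisymm (Nat.ceil_le.2 ?_) (Nat.one_le_iff_ne_zero.2 ?_)
    · rw [Nat.cast_one]; exact div_le_one_of_le₀ hHdx hdx.le
    · simp only [ne_eq, Nat.ceil_eq_zero, not_le]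
      positivity
  unfold discConv
  rw [hceil]
  simp only [Finset.sum_range_one, Nat.cast_zero, neg_zero, zero_mul, zero_div, add_zero]
  rw [mul_div_assoc, div_self (by positivity), mul_one]

private lemma nlocIter_eq {dx H dt : ℝ} (hH : 0 < H) (hHdx : H ≤ dx) (hdx : 0 < dx)
    {η : ℝ → ℝ} (hη0 : η 0 ≠ 0) (U0 : ℤ → ℝ) :
    ∀ m, nlocIter dx dt H η U0 m = locIter dx dt U0 m := by
  intro m
  induction m with
  | zero => rfl
  | succ m ih =>
    show elStep _ _ _ _ = _
    rw [show (fun j => 1 - discConv dx H η (nlocIter dx dt H η U0 m) j)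
        = fun j => 1 - nlocIter dx dt H η U0 m j from
      funext fun j => by rw [discConv_eq hH hHdx hdx hη0], ih]
    rfl

private lemma elStep_mem {dx : ℝ} (hdx : 0 < dx) {U : ℤ → ℝ} (hU : ∀ j, U j ∈ Set.Icc (0:ℝ) 1) (j : ℤ) :
    elStep dx (dx/8) U (fun i => 1 - U i) j ∈ Set.Icc (0:ℝ) 1 := by
  obtain ⟨ha0, ha1⟩ := hU (j-1); obtain ⟨hb0, hb1⟩ := hU j; obtain ⟨hc0, hc1⟩ := hU (j+1)
  set a := U (j-1) with hadef; set b := U j with hbdef; set c := U (j+1) with hcdef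
  have hD1 : (0:ℝ) < 8 + a - b := by linarith
  have hD2 : (0:ℝ) < 8 + b - c := by linarith
  have hd1 : dx + dx/8 * ((1 - b) - (1 - a)) = dx*(8+a-b)/8 := by ring
  have hd2 : dx + dx/8 * ((1 - c) - (1 - b)) = dx*(8+b-c)/8 := by ring
  have hd1p : (0:ℝ) < dx + dx/8 * ((1 - b) - (1 - a)) := by rw [hd1]; positivity
  have hd2p : (0:ℝ) < dx + dx/8 * ((1 - c) - (1 - b)) := by rw [hd2]; positivity
  have heq : elStep dx (dx/8) U (fun i => 1 - U i) j =
      ((a+2*b+c)*((8+a-b)*(8+b-c)) + ((a+b)*(2-a-b)*(8+b-c) - (b+c)*(2-b-c)*(8+a-b)))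
        / (4*((8+a-b)*(8+b-c))) := by
    unfold elStep
    simp only [← hadef, ← hbdef, ← hcdef]
    rw [hd1, hd2]
    field_simp
    ring
  rw [heq]
  constructor
  · apply div_nonneg _ (by positivity)
    nlinarith [mul_nonneg ha0 hb0, mul_nonneg hb0 hc0, mul_nonneg ha0 hc0,
      mul_nonneg (mul_nonneg ha0 hb0) hc0, sq_nonneg (a-b), sq_nonneg (b-c), sq_nonneg (a-c),
      mul_nonneg ha0 (sub_nonneg.2 hb1), mul_nonneg hb0 (sub_nonneg.2 hc1),
      mul_nonneg hc0 (sub_nonneg.2 ha1), mul_nonneg hb0 (sub_nonneg.2 ha1),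
      mul_nonneg hc0 (sub_nonneg.2 hb1), mul_nonneg ha0 (sub_nonneg.2 hc1)]
  · rw [div_le_one (by positivity)]
    nlinarith [mul_nonneg ha0 hb0, mul_nonneg hb0 hc0, mul_nonneg ha0 hc0,
      mul_nonneg (mul_nonneg ha0 hb0) hc0, sq_nonneg (a-b), sq_nonneg (b-c), sq_nonneg (a-c),
      mul_nonneg ha0 (sub_nonneg.2 hb1), mul_nonneg hb0 (sub_nonneg.2 hc1),
      mul_nonneg hc0 (sub_nonneg.2 ha1), mul_nonneg hb0 (sub_nonneg.2 ha1),
      mul_nonneg hc0 (sub_nonneg.2 hb1), mul_nonneg ha0 (sub_nonneg.2 hc1),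
      mul_nonneg (sub_nonneg.2 ha1) (sub_nonneg.2 hb1),
      mul_nonneg (sub_nonneg.2 hb1) (sub_nonneg.2 hc1),
      mul_nonneg (sub_nonneg.2 ha1) (sub_nonneg.2 hc1)]

private lemma locIter_mem {dx : ℝ} (hdx : 0 < dx) {U0 : ℤ → ℝ}
    (hU0 : ∀ j, U0 j ∈ Set.Icc (0:ℝ) 1) :
    ∀ m j, locIter dx (dx/8) U0 m j ∈ Set.Icc (0:ℝ) 1 := by
  intro m
  induction m with
  | zero => exact hU0
  | succ m ih => exact fun j => elStep_mem hdx ih j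

private lemma locIter_tendsto {dx : ℝ} (hdx : 0 < dx) {Uk : ℕ → ℤ → ℝ} {U0 : ℤ → ℝ}
    (hU0 : ∀ j, U0 j ∈ Set.Icc (0:ℝ) 1)
    (hconv : ∀ j, Tendsto (fun k => Uk k j) atTop (𝓝 (U0 j))) :
    ∀ m j, Tendsto (fun k => locIter dx (dx/8) (Uk k) m j) atTop
      (𝓝 (locIter dx (dx/8) U0 m j)) := by
  intro m
  induction m with
  | zero => exact hconv
  | succ m ih =>
    intro j
    have hmem := locIter_mem hdx hU0 m
    obtain ⟨ha0, ha1⟩ := hmem (j-1); obtain ⟨hb0, hb1⟩ := hmem j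
    obtain ⟨hc0, hc1⟩ := hmem (j+1)
    have h1 := ih (j-1); have h2 := ih j; have h3 := ih (j+1)
    show Tendsto (fun k => elStep dx (dx/8) (locIter dx (dx/8) (Uk k) m)
      (fun i => 1 - locIter dx (dx/8) (Uk k) m i) j) atTop
      (𝓝 (elStep dx (dx/8) (locIter dx (dx/8) U0 m)
        (fun i => 1 - locIter dx (dx/8) U0 m i) j))
    unfold elStep
    simp only []
    have hd1 : dx + dx/8 * ((1 - locIter dx (dx/8) U0 m j)
        - (1 - locIter dx (dx/8) U0 m (j-1))) ≠ 0 := by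
      have : dx + dx/8 * ((1 - locIter dx (dx/8) U0 m j)
          - (1 - locIter dx (dx/8) U0 m (j-1)))
          = dx*(8 + locIter dx (dx/8) U0 m (j-1) - locIter dx (dx/8) U0 m j)/8 := by ring
      refine this ▸ ne_of_gt (div_pos (mul_pos hdx (by linarith)) (by norm_num))
    have hd2 : dx + dx/8 * ((1 - locIter dx (dx/8) U0 m (j+1))
        - (1 - locIter dx (dx/8) U0 m j)) ≠ 0 := by
      have : dx + dx/8 * ((1 - locIter dx (dx/8) U0 m (j+1))
          - (1 - locIter dx (dx/8) U0 m j))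
          = dx*(8 + locIter dx (dx/8) U0 m j - locIter dx (dx/8) U0 m (j+1))/8 := by ring
      refine this ▸ ne_of_gt (div_pos (mul_pos hdx (by linarith)) (by norm_num))
    exact (((h1.add (Tendsto.const_mul 2 h2)).add h3).div_const 4).add
      (Tendsto.const_mul (dx/8/4) ((((h2.add h1).mul ((tendsto_const_nhds.sub h2).add (tendsto_const_nhds.sub h1))).div
          (tendsto_const_nhds.add ((((tendsto_const_nhds.sub h2)).sub
            ((tendsto_const_nhds.sub h1))).const_mul (dx/8))) hd1).sub
        (((h3.add h2).mul ((tendsto_const_nhds.sub h3).add (tendsto_const_nhds.sub h2))).div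
          (tendsto_const_nhds.add ((((tendsto_const_nhds.sub h3)).sub
            ((tendsto_const_nhds.sub h2))).const_mul (dx/8))) hd2)))

private lemma cellIdx_cast {dx : ℝ} (hdx : 0 < dx) (j : ℤ) : cellIdx dx ((j:ℝ)*dx) = j := by
  unfold cellIdx
  rw [mul_div_cancel_right₀ _ hdx.ne', Int.floor_intCast_add]
  norm_num

private lemma mem_cell {dx : ℝ} (hdx : 0 < dx) (x : ℝ) :
    x ∈ Set.Ico (((cellIdx dx x : ℝ) - 1/2) * dx) (((cellIdx dx x : ℝ) + 1/2) * dx) := by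
  have h1 := Int.floor_le (x/dx + 1/2)
  have h2 := Int.lt_floor_add_one (x/dx + 1/2)
  unfold cellIdx
  constructor
  · have : ((⌊x/dx + 1/2⌋ : ℝ) - 1/2) ≤ x / dx := by linarith
    calc ((⌊x/dx + 1/2⌋ : ℝ) - 1/2) * dx ≤ (x/dx) * dx := by
          exact mul_le_mul_of_nonneg_right this hdx.le
      _ = x := by field_simp
  · have : x / dx < ((⌊x/dx + 1/2⌋ : ℝ) + 1/2) := by linarith
    calc x = (x/dx) * dx := by field_simp
      _ < ((⌊x/dx + 1/2⌋ : ℝ) + 1/2) * dx := by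
          exact mul_lt_mul_of_pos_right this hdx

private lemma cellIdx_of_mem {dx : ℝ} (hdx : 0 < dx) {x : ℝ} {j : ℤ}
    (hx : x ∈ Set.Ico (((j:ℝ) - 1/2) * dx) (((j:ℝ) + 1/2) * dx)) :
    cellIdx dx x = j := by
  obtain ⟨hl, hr⟩ := hx
  unfold cellIdx
  rw [Int.floor_eq_iff]
  constructor
  · have : ((j:ℝ) - 1/2) ≤ x / dx := (le_div_iff₀ hdx).2 hl
    linarith
  · have : x / dx < ((j:ℝ) + 1/2) := (div_lt_iff₀ hdx).2 hr
    push_cast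
    linarith

private lemma measurable_cellIdx {dx : ℝ} : Measurable fun x => cellIdx dx x := by
  unfold cellIdx
  exact Measurable.floor ((measurable_id.div_const dx).add_const (1/2))

private lemma measurable_comp_cellIdx {dx : ℝ} (g : ℤ → ℝ) :
    Measurable fun x => g (cellIdx dx x) :=
  (measurable_from_top).comp measurable_cellIdx

end AuxLemmas

/-- Convergence of minimizers for the discrete control
problems in the nonlocal-to-local limit: if `H_n → 0⁺` and `U_o^n` minimizes
`G_{Δ,H_n}` over `U_{Δ,ad}`, then a subsequence of `(U_o^n)` converges in
`L¹(ℝ)` to a minimizer of `G_Δ` over `U_{Δ,ad}`. -/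
theorem stmt15 (dx T MΔ : ℝ) (hdx : 0 < dx) (hT : 0 < T)
    (hTmul : ∃ m : ℕ, T = (m : ℝ) * (dx / 8)) (hMΔ : 0 < MΔ)
    (K : Set ℝ) (hK : IsCompact K)
    (η : ℝ → ℝ) (hη : KernelOK η)
    (J I : (ℝ → ℝ) → ℝ) (Kt : (ℝ → ℝ → ℝ) → ℝ)
    (hJ0 : ∀ f, 0 ≤ J f) (hKt0 : ∀ f, 0 ≤ Kt f) (hI0 : ∀ f, 0 ≤ I f)
    (hJcont : ∀ (fn : ℕ → ℝ → ℝ) (f : ℝ → ℝ), L1locConv fn f →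
      Tendsto (fun n => J (fn n)) atTop (nhds (J f)))
    (hKtcont : ∀ (fn : ℕ → ℝ → ℝ → ℝ) (f : ℝ → ℝ → ℝ), L1locConvT T fn f →
      Tendsto (fun n => Kt (fn n)) atTop (nhds (Kt f)))
    (hIlsc : ∀ (fn : ℕ → ℝ → ℝ) (f : ℝ → ℝ), L1locConv fn f →
      I f ≤ liminf (fun n => I (fn n)) atTop)
    (Hn : ℕ → ℝ) (hHn : ∀ n, 0 < Hn n) (hHn0 : Tendsto Hn atTop (nhds 0))
    (Un : ℕ → ℝ → ℝ) (hUn : ∀ n, Un n ∈ Uad dx MΔ K)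
    (hUnmin : ∀ n, ∀ U' ∈ Uad dx MΔ K,
      Gnloc dx (Hn n) T η J Kt I (Un n) ≤ Gnloc dx (Hn n) T η J Kt I U') :
    ∃ φ : ℕ → ℕ, StrictMono φ ∧ ∃ Uo ∈ Uad dx MΔ K,
      Tendsto (fun k => ∫ x : ℝ, |Un (φ k) x - Uo x|) atTop (nhds 0) ∧
      ∀ U' ∈ Uad dx MΔ K, Gloc dx T J Kt I Uo ≤ Gloc dx T J Kt I U' := by
  classical
  have hη0 : 0 < η 0 := eta0_pos hη
  -- bound on K
  obtain ⟨R, hRK⟩ : ∃ R, K ⊆ Set.Icc (-R) R := by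
    obtain ⟨R, hR⟩ := hK.isBounded.subset_closedBall 0
    exact ⟨R, by simpa [Real.closedBall_eq_Icc] using hR⟩
  -- cell representation for admissible functions
  have hrep : ∀ U ∈ Uad dx MΔ K, ∀ x : ℝ, U x = U (((cellIdx dx x : ℝ)) * dx) :=
    fun U hU x => hU.2.1 (cellIdx dx x) x (mem_cell hdx x)
  -- compactness and subsequence extraction on cell values
  have hcpt : IsCompact (Set.univ.pi fun _ : ℤ => Set.Icc (0:ℝ) 1) :=
    isCompact_univ_pi fun _ => isCompact_Icc
  have hmem : ∀ n, (fun j : ℤ => Un n ((j:ℝ)*dx)) ∈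
      Set.univ.pi fun _ : ℤ => Set.Icc (0:ℝ) 1 := fun n j _ => (hUn n).1 _
  obtain ⟨a, haS, φ, hφ, hconv⟩ := hcpt.tendsto_subseq hmem
  have hamem : ∀ j, a j ∈ Set.Icc (0:ℝ) 1 := fun j => haS j (Set.mem_univ j)
  have hconv' : ∀ j : ℤ, Tendsto (fun k => Un (φ k) ((j:ℝ)*dx)) atTop (𝓝 (a j)) :=
    fun j => tendsto_pi_nhds.1 hconv j
  -- the limit candidate
  set Uo : ℝ → ℝ := fun x => a (cellIdx dx x) with hUodef
  have hUoa : (fun j : ℤ => Uo ((j:ℝ)*dx)) = a := by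
    funext j; simp only [hUodef, cellIdx_cast hdx]
  have hUoptw : ∀ x, Tendsto (fun k => Un (φ k) x) atTop (𝓝 (Uo x)) := by
    intro x
    have : ∀ k, Un (φ k) x = Un (φ k) (((cellIdx dx x : ℝ)) * dx) :=
      fun k => hrep _ (hUn (φ k)) x
    simpa only [← this] using hconv' (cellIdx dx x)
  -- Uo is admissible
  have hUoK : ∀ x, x ∉ K → Uo x = 0 := by
    intro x hx
    have hzero : ∀ k, Un (φ k) x = 0 := by
      intro k
      by_contra h0
      exact hx ((hUn (φ k)).2.2.2 (Function.mem_support.2 h0))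
    have : Tendsto (fun k : ℕ => (0:ℝ)) atTop (𝓝 (Uo x)) := by
      refine (hUoptw x).congr fun k => (hzero k)
    exact tendsto_nhds_unique this tendsto_const_nhds
  have hUoUad : Uo ∈ Uad dx MΔ K := by
    refine ⟨fun x => hamem _, ?_, ?_, ?_⟩
    · intro j x hx
      simp only [hUodef, cellIdx_of_mem hdx hx, cellIdx_cast hdx]
    · by_contra hlt
      push_neg at hlt
      have hev := eVariationOn.lowerSemicontinuous_aux
        (F := fun k => Un (φ k)) (p := atTop) (f := Uo) (s := Set.univ)
        (fun x _ => hUoptw x) hlt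
      obtain ⟨k, hk⟩ := hev.exists
      exact absurd (hUn (φ k)).2.2.1 (not_le.2 hk)
    · intro x hx
      by_contra hxK
      exact (Function.mem_support.1 hx) (hUoK x hxK)
  -- measurability of admissible functions
  have hmeasUad : ∀ U ∈ Uad dx MΔ K, Measurable U := by
    intro U hU
    have : U = fun x => U (((cellIdx dx x : ℝ)) * dx) := funext (hrep U hU)
    rw [this]
    exact measurable_comp_cellIdx (fun j : ℤ => U ((j:ℝ)*dx))
  have hUomeas : Measurable Uo := measurable_comp_cellIdx a
  -- L¹ convergence of the subsequence
  have hbound_int : Integrable ((Set.Icc (-R) R).indicator fun _ => (1:ℝ)) := by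
    rw [integrable_indicator_iff measurableSet_Icc]
    exact integrableOn_const measure_Icc_lt_top.ne
  have hFmeas : ∀ k, AEStronglyMeasurable (fun x => |Un (φ k) x - Uo x|) volume :=
    fun k => (((hmeasUad _ (hUn (φ k))).sub hUomeas).abs).aestronglyMeasurable
  have hFbound : ∀ k, ∀ᵐ x ∂(volume : Measure ℝ),
      ‖|Un (φ k) x - Uo x|‖ ≤ (Set.Icc (-R) R).indicator (fun _ => (1:ℝ)) x := by
    intro k
    refine ae_of_all _ fun x => ?_
    rw [Real.norm_eq_abs, abs_abs]
    by_cases hx : x ∈ Set.Icc (-R) R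
    · rw [Set.indicator_of_mem hx]
      obtain ⟨h10, h11⟩ := (hUn (φ k)).1 x
      obtain ⟨h20, h21⟩ := hamem (cellIdx dx x)
      rw [abs_sub_le_iff]
      constructor <;> simp only [hUodef] <;> linarith
    · rw [Set.indicator_of_notMem hx]
      have hxK : x ∉ K := fun h => hx (hRK h)
      have h1 : Un (φ k) x = 0 := by
        by_contra h0
        exact hxK ((hUn (φ k)).2.2.2 (Function.mem_support.2 h0))
      rw [h1, hUoK x hxK]
      simp
  have hFint : ∀ k, Integrable (fun x => |Un (φ k) x - Uo x|) :=
    fun k => hbound_int.mono' (hFmeas k) (hFbound k)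
  have hFlim : ∀ᵐ x ∂(volume : Measure ℝ),
      Tendsto (fun k => |Un (φ k) x - Uo x|) atTop (𝓝 0) := by
    refine ae_of_all _ fun x => ?_
    have := ((hUoptw x).sub_const (Uo x)).abs
    simpa using this
  have hL1 : Tendsto (fun k => ∫ x : ℝ, |Un (φ k) x - Uo x|) atTop (𝓝 0) := by
    have := tendsto_integral_of_dominated_convergence
      ((Set.Icc (-R) R).indicator fun _ => (1:ℝ)) hFmeas hbound_int hFbound hFlim
    simpa using this
  -- L¹_loc convergence of the subsequence
  have hL1loc : L1locConv (fun k => Un (φ k)) Uo := by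
    intro R' hR'
    have hle : ∀ k, ∫ x in (-R')..R', |Un (φ k) x - Uo x| ≤
        ∫ x : ℝ, |Un (φ k) x - Uo x| := by
      intro k
      rw [intervalIntegral.integral_of_le (by linarith)]
      exact setIntegral_le_integral (hFint k) (ae_of_all _ fun x => abs_nonneg _)
    have h0 : ∀ k, (0:ℝ) ≤ ∫ x in (-R')..R', |Un (φ k) x - Uo x| :=
      fun k => intervalIntegral.integral_nonneg (by linarith) (fun x _ => abs_nonneg _)
    exact tendsto_of_tendsto_of_tendsto_of_le_of_le tendsto_const_nhds hL1 h0 hle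
  -- eventually the nonlocal scheme is the local scheme
  obtain ⟨N, hN⟩ := eventually_atTop.1 (hHn0.eventually_lt_const hdx)
  have hGeq : ∀ n, N ≤ n → ∀ U : ℝ → ℝ,
      Gnloc dx (Hn n) T η J Kt I U = Gloc dx T J Kt I U := by
    intro n hn U
    have hsol : nlocSol dx (Hn n) η U = locSol dx U := by
      funext t x
      unfold nlocSol locSol
      rw [nlocIter_eq (hHn n) (hN n hn).le hdx hη0.ne']
    unfold Gnloc Gloc
    rw [hsol]
  -- the common minimum value
  set c : ℝ := Gloc dx T J Kt I (Un N) with hcdef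
  have hc_le : ∀ U' ∈ Uad dx MΔ K, c ≤ Gloc dx T J Kt I U' := by
    intro U' hU'
    have := hUnmin N U' hU'
    rwa [hGeq N le_rfl, hGeq N le_rfl] at this
  have hc_eq : ∀ n, N ≤ n → Gloc dx T J Kt I (Un n) = c := by
    intro n hn
    have h1 := hUnmin n (Un N) (hUn N)
    have h2 := hUnmin N (Un n) (hUn n)
    rw [hGeq n hn, hGeq n hn] at h1
    rw [hGeq N le_rfl, hGeq N le_rfl] at h2
    exact le_antisymm h1 h2
  -- convergence of the scheme iterates
  have hIter : ∀ m j, Tendsto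
      (fun k => locIter dx (dx/8) (fun j' : ℤ => Un (φ k) ((j':ℝ)*dx)) m j) atTop
      (𝓝 (locIter dx (dx/8) a m j)) :=
    locIter_tendsto hdx hamem hconv'
  have hUnItermem : ∀ k m j,
      locIter dx (dx/8) (fun j' : ℤ => Un (φ k) ((j':ℝ)*dx)) m j ∈ Set.Icc (0:ℝ) 1 :=
    fun k => locIter_mem hdx (fun j' => (hUn (φ k)).1 _)
  have haItermem : ∀ m j, locIter dx (dx/8) a m j ∈ Set.Icc (0:ℝ) 1 :=
    locIter_mem hdx hamem
  -- slice convergence at a fixed time level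
  have hslice : ∀ (m : ℕ) (R' : ℝ), 0 < R' → Tendsto (fun k =>
      ∫ x in (-R')..R', |locIter dx (dx/8) (fun j' : ℤ => Un (φ k) ((j':ℝ)*dx)) m
        (cellIdx dx x) - locIter dx (dx/8) a m (cellIdx dx x)|) atTop (𝓝 0) := by
    intro m R' hR'
    have := intervalIntegral.tendsto_integral_filter_of_dominated_convergence
      (μ := volume) (l := atTop) (a := -R') (b := R') (f := fun _ : ℝ => (0:ℝ))
      (F := fun k x => |locIter dx (dx/8) (fun j' : ℤ => Un (φ k) ((j':ℝ)*dx)) m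
        (cellIdx dx x) - locIter dx (dx/8) a m (cellIdx dx x)|)
      (bound := fun _ => 2)
      (Eventually.of_forall fun k =>
        (((measurable_comp_cellIdx _).sub (measurable_comp_cellIdx _)).abs
          ).aestronglyMeasurable.restrict)
      (Eventually.of_forall fun k => ae_of_all _ fun x _ => by
        obtain ⟨h10, h11⟩ := hUnItermem k m (cellIdx dx x)
        obtain ⟨h20, h21⟩ := haItermem m (cellIdx dx x)
        rw [Real.norm_eq_abs, abs_abs, abs_sub_le_iff]
        constructor <;> linarith)
      intervalIntegrable_const
      (ae_of_all _ fun x _ => by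
        have := ((hIter m (cellIdx dx x)).sub_const (locIter dx (dx/8) a m (cellIdx dx x))).abs
        simpa using this)
    simpa using this
  -- L¹_loc convergence of solutions at time T
  have hJL1loc : L1locConv (fun k x => locSol dx (Un (φ k)) T x)
      (fun x => locSol dx Uo T x) := by
    intro R' hR'
    simp only [locSol, hUoa]
    exact hslice _ R' hR'
  -- L¹_loc convergence of solutions on [0,T] × ℝ
  have hKL1loc : L1locConvT T (fun k => locSol dx (Un (φ k))) (locSol dx Uo) := by
    intro R' hR'
    simp only [locSol, hUoa]
    have := intervalIntegral.tendsto_integral_filter_of_dominated_convergence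
      (μ := volume) (l := atTop) (a := (0:ℝ)) (b := T) (f := fun _ : ℝ => (0:ℝ))
      (F := fun k t => ∫ x in (-R')..R',
        |locIter dx (dx/8) (fun j' : ℤ => Un (φ k) ((j':ℝ)*dx)) ⌊t / (dx/8)⌋₊
          (cellIdx dx x) - locIter dx (dx/8) a ⌊t / (dx/8)⌋₊ (cellIdx dx x)|)
      (bound := fun _ => 2 * |R' - (-R')|)
      (Eventually.of_forall fun k => by
        have hmeq : (fun t : ℝ => ∫ x in (-R')..R',
            |locIter dx (dx/8) (fun j' : ℤ => Un (φ k) ((j':ℝ)*dx)) ⌊t / (dx/8)⌋₊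
              (cellIdx dx x) - locIter dx (dx/8) a ⌊t / (dx/8)⌋₊ (cellIdx dx x)|)
            = (fun m : ℕ => ∫ x in (-R')..R',
            |locIter dx (dx/8) (fun j' : ℤ => Un (φ k) ((j':ℝ)*dx)) m
              (cellIdx dx x) - locIter dx (dx/8) a m (cellIdx dx x)|)
              ∘ (fun t : ℝ => ⌊t / (dx/8)⌋₊) := rfl
        exact (hmeq ▸ ((measurable_from_top).comp
          ((measurable_id.div_const (dx/8)).nat_floor) :
            Measurable ((fun m : ℕ => ∫ x in (-R')..R',
            |locIter dx (dx/8) (fun j' : ℤ => Un (φ k) ((j':ℝ)*dx)) m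
              (cellIdx dx x) - locIter dx (dx/8) a m (cellIdx dx x)|)
              ∘ (fun t : ℝ => ⌊t / (dx/8)⌋₊)))).aestronglyMeasurable.restrict)
      (Eventually.of_forall fun k => ae_of_all _ fun t _ => by
        rw [Real.norm_eq_abs]
        have hb : ∀ x ∈ Set.uIoc (-R') R',
            ‖|locIter dx (dx/8) (fun j' : ℤ => Un (φ k) ((j':ℝ)*dx)) ⌊t / (dx/8)⌋₊
              (cellIdx dx x) - locIter dx (dx/8) a ⌊t / (dx/8)⌋₊ (cellIdx dx x)|‖
              ≤ 2 := by
          intro x _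
          obtain ⟨h10, h11⟩ := hUnItermem k ⌊t / (dx/8)⌋₊ (cellIdx dx x)
          obtain ⟨h20, h21⟩ := haItermem ⌊t / (dx/8)⌋₊ (cellIdx dx x)
          rw [Real.norm_eq_abs, abs_abs, abs_sub_le_iff]
          constructor <;> linarith
        have := intervalIntegral.norm_integral_le_of_norm_le_const hb
        rw [Real.norm_eq_abs] at this
        calc |∫ x in (-R')..R', _| ≤ 2 * |R' - (-R')| := this
        )
      intervalIntegrable_const
      (ae_of_all _ fun t _ => hslice ⌊t / (dx/8)⌋₊ R' hR')
    simpa using this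
  -- pass to the limit in the functionals
  set A : ℝ := J (fun x => locSol dx Uo T x) with hAdef
  set B : ℝ := Kt (locSol dx Uo) with hBdef
  have hJlim : Tendsto (fun k => J (fun x => locSol dx (Un (φ k)) T x)) atTop (𝓝 A) :=
    hJcont _ _ hJL1loc
  have hKlim : Tendsto (fun k => Kt (locSol dx (Un (φ k)))) atTop (𝓝 B) :=
    hKtcont _ _ hKL1loc
  have hIev : ∀ᶠ k in atTop, I (Un (φ k)) =
      c - J (fun x => locSol dx (Un (φ k)) T x) - Kt (locSol dx (Un (φ k))) := by
    refine eventually_atTop.2 ⟨N, fun k hk => ?_⟩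
    have hNk : N ≤ φ k := hk.trans (hφ.le_apply)
    have := hc_eq (φ k) hNk
    unfold Gloc at this
    linarith
  have hIlim : Tendsto (fun k => I (Un (φ k))) atTop (𝓝 (c - A - B)) := by
    refine Tendsto.congr' (hIev.mono fun k hk => hk.symm) ?_
    exact (tendsto_const_nhds.sub hJlim).sub hKlim
  have hIUo : I Uo ≤ c - A - B := by
    have := hIlsc (fun k => Un (φ k)) Uo hL1loc
    rwa [hIlim.liminf_eq] at this
  refine ⟨φ, hφ, Uo, hUoUad, hL1, fun U' hU' => ?_⟩
  have : Gloc dx T J Kt I Uo ≤ c := by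
    unfold Gloc
    rw [← hAdef, ← hBdef]
    linarith
  exact this.trans (hc_le U' hU')
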